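/- Let χ be a quasicharacter of F^× of conductor 𝔭ⁿ with n ≥ 1, and let a ∈ F^× with ord(a) ≠ −n. Then ∫_U ψ(ax)χ(x) d^×x = 0. -/

import Mathlib

open MeasureTheory Filter

variable {F : Type*}

/-- The valuation ring `𝒪 = {x | ord x ≥ 0}` (with the convention `0 ∈ 𝒪`). -/
def valRing [Field F] (ord : F → ℤ) : Set F := {x | x = 0 ∨ 0 ≤ ord x}

/-- The unit group `U = 𝒪^×`. -/
def unitGroup [Field F] (ord : F → ℤ) : Set F := {x | x ≠ 0 ∧ ord x = 0}

/-- The principal congruence subgroup `U⁽ⁿ⁾ = {x ∈ U | x ≡ 1 mod 𝔭ⁿ}` (with `U⁽⁰⁾ = U`). -/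
def unitGroupN [Field F] (ord : F → ℤ) (n : ℕ) : Set F :=
  {x | x ≠ 0 ∧ ord x = 0 ∧ (x = 1 ∨ (n : ℤ) ≤ ord (x - 1))}

/-- A quasicharacter of `F^×`: a multiplicative map `F^× → ℂ^×`. -/
def IsQuasichar [Field F] (χ : F → ℂ) : Prop :=
  (∀ x y : F, x ≠ 0 → y ≠ 0 → χ (x * y) = χ x * χ y) ∧ ∀ x : F, x ≠ 0 → χ x ≠ 0

/-- `χ` has conductor `𝔭^f`: `f` is minimal with `U⁽ᶠ⁾ ⊆ ker χ`. -/
def HasConductor [Field F] (ord : F → ℤ) (χ : F → ℂ) (f : ℕ) : Prop :=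
  (∀ x ∈ unitGroupN ord f, χ x = 1) ∧ ∀ m : ℕ, m < f → ∃ x ∈ unitGroupN ord m, χ x ≠ 1

/-- The integral `∫_X f d^×x` against the multiplicative Haar measure
`d^×x = (1 - 1/q)⁻¹ dx/|x|`, where `dx = μ` is the additive Haar measure and
`|x| = q^{-ord x}` (so `dx/|x| = q^{ord x} dx`). -/
noncomputable def mulInt [Field F] [MeasurableSpace F] (μ : Measure F) (q : ℕ)
    (ord : F → ℤ) (X : Set F) (f : F → ℂ) : ℂ :=
  (1 - (q : ℂ)⁻¹)⁻¹ * ∫ x in X, f x * (q : ℂ) ^ (ord x) ∂μ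

/-- Multiplication by a nonzero scalar, as an additive automorphism of a field. -/
def mulLeftAddEquiv [Field F] (u : F) (hu : u ≠ 0) : F ≃+ F where
  toFun x := u * x
  invFun x := u⁻¹ * x
  left_inv x := by field_simp
  right_inv x := by field_simp
  map_add' x y := mul_add u x y

/-- Let `χ` be a quasicharacter of `F^×` of conductor `𝔭ⁿ` with `n ≥ 1`,
and let `a ∈ F^×` with `ord a ≠ -n`. Then `∫_U ψ(ax)χ(x) d^×x = 0`. -/
theorem stmt2 [Field F] [TopologicalSpace F] [IsTopologicalRing F]
    [MeasurableSpace F] [BorelSpace F]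
    (q : ℕ) (hq : 2 ≤ q)
    (ord : F → ℤ)
    (hord : ∀ x y : F, x ≠ 0 → y ≠ 0 → ord (x * y) = ord x + ord y)
    (ϖ : F) (hϖ0 : ϖ ≠ 0) (hϖ : ord ϖ = 1)
    (hbasis : (nhds (0 : F)).HasBasis (fun _ : ℕ => True)
      (fun n => {x : F | x = 0 ∨ (n : ℤ) ≤ ord x}))
    (hcomp : IsCompact (valRing ord))
    (ψ : F → ℂ) (hψc : Continuous ψ)
    (hψadd : ∀ x y : F, ψ (x + y) = ψ x * ψ y)
    (hψker : ∀ x : F, ψ x = 1 ↔ x ∈ valRing ord)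
    (μ : Measure F) [μ.IsAddHaarMeasure]
    (hμ1 : μ (valRing ord) = 1)
    (hμϖ : ∀ s : Set F, μ ((fun x => ϖ * x) '' s) = μ s / q)
    (χ : F → ℂ) (hχ : IsQuasichar χ) (hχc : ContinuousOn χ {x : F | x ≠ 0})
    (n : ℕ) (hn : 1 ≤ n) (hχcond : HasConductor ord χ n)
    (a : F) (ha : a ≠ 0) (haord : ord a ≠ -(n : ℤ)) :
    mulInt μ q ord (unitGroup ord) (fun x => ψ (a * x) * χ x) = 0 := by
  -- ### basic facts about `ord`
  have hord1 : ord 1 = 0 := by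
    have h := hord 1 1 one_ne_zero one_ne_zero
    rw [one_mul] at h; omega
  have hordneg : ∀ x : F, x ≠ 0 → ord (-x) = ord x := by
    have h1 := hord (-1 : F) (-1) (by norm_num) (by norm_num)
    rw [neg_mul_neg, one_mul, hord1] at h1
    intro x hx
    have h := hord (-1 : F) x (by norm_num) hx
    rw [neg_one_mul] at h; omega
  have hordinv : ∀ x : F, x ≠ 0 → ord x⁻¹ = -ord x := by
    intro x hx
    have h := hord x x⁻¹ hx (inv_ne_zero hx)
    rw [mul_inv_cancel₀ hx, hord1] at h; omega
  have hpow : ∀ k : ℕ, ϖ ^ k ≠ 0 ∧ ord (ϖ ^ k) = k := by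
    intro k
    induction k with
    | zero => simpa using hord1
    | succ m ih =>
      refine ⟨pow_ne_zero _ hϖ0, ?_⟩
      rw [pow_succ, hord _ _ ih.1 hϖ0, ih.2, hϖ]
      push_cast; ring
  have hzpow : ∀ k : ℤ, ϖ ^ k ≠ 0 ∧ ord (ϖ ^ k) = k := by
    intro k
    cases k with
    | ofNat m => simpa [zpow_natCast] using hpow m
    | negSucc m =>
      rw [zpow_negSucc]
      have h := hpow (m + 1)
      refine ⟨inv_ne_zero h.1, ?_⟩
      rw [hordinv _ h.1, h.2, Int.negSucc_eq]
      push_cast; ring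
  -- ### `𝒪` is an additive subgroup (via the character `ψ`)
  have hψ0 : ψ 0 = 1 := (hψker 0).2 (Or.inl rfl)
  have hOadd : ∀ s t : F, s ∈ valRing ord → t ∈ valRing ord → s + t ∈ valRing ord := by
    intro s t hs ht
    exact (hψker _).1 (by rw [hψadd, (hψker s).2 hs, (hψker t).2 ht, mul_one])
  have hOneg : ∀ s : F, s ∈ valRing ord → -s ∈ valRing ord := by
    intro s hs
    refine (hψker _).1 ?_
    have h := hψadd s (-s)
    rw [add_neg_cancel, hψ0, (hψker s).2 hs, one_mul] at h
    exact h.symm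
  -- ### the ultrametric inequality
  have hmin : ∀ x y : F, x ≠ 0 → y ≠ 0 → x + y ≠ 0 →
      min (ord x) (ord y) ≤ ord (x + y) := by
    intro x y hx hy hxy
    set m := min (ord x) (ord y) with hm
    obtain ⟨hc0, hcord⟩ := hzpow (-m)
    have h1 : ϖ ^ (-m) * x ∈ valRing ord := by
      refine Or.inr ?_
      rw [hord _ _ hc0 hx, hcord]
      have : m ≤ ord x := min_le_left _ _
      omega
    have h2 : ϖ ^ (-m) * y ∈ valRing ord := by
      refine Or.inr ?_
      rw [hord _ _ hc0 hy, hcord]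
      have : m ≤ ord y := min_le_right _ _
      omega
    have h3 := hOadd _ _ h1 h2
    rw [← mul_add] at h3
    rcases h3 with h3 | h3
    · exact absurd h3 (mul_ne_zero hc0 hxy)
    · rw [hord _ _ hc0 hxy, hcord] at h3; omega
  have hltadd : ∀ x y : F, x ≠ 0 → y ≠ 0 → ord x < ord y →
      x + y ≠ 0 ∧ ord (x + y) = ord x := by
    intro x y hx hy hlt
    have hne : x + y ≠ 0 := by
      intro h
      have hyx : y = -x := by
        have := add_eq_zero_iff_eq_neg.1 h
        rw [this]; ring
      rw [hyx, hordneg _ hx] at hlt; omega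
    refine ⟨hne, ?_⟩
    have h1 : min (ord x) (ord y) ≤ ord (x + y) := hmin x y hx hy hne
    have h2 : min (ord (x + y)) (ord (-y)) ≤ ord x := by
      have h := hmin (x + y) (-y) hne (neg_ne_zero.2 hy)
        (by rw [add_neg_cancel_right]; exact hx)
      rwa [add_neg_cancel_right] at h
    rw [hordneg _ hy] at h2
    omega
  -- ### topology
  have hOmem : ∀ (k : ℕ), {x : F | x = 0 ∨ (k : ℤ) ≤ ord x} ∈ nhds (0 : F) :=
    fun k => hbasis.mem_of_mem trivial
  have hOnhds : valRing ord ∈ nhds (0 : F) := by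
    refine Filter.mem_of_superset (hOmem 0) (fun x hx => ?_)
    rcases hx with h | h
    · exact Or.inl h
    · exact Or.inr (by omega)
  have hOopen : IsOpen (valRing ord) :=
    AddSubgroup.isOpen_of_mem_nhds
      { carrier := valRing ord
        add_mem' := fun hs ht => hOadd _ _ hs ht
        zero_mem' := Or.inl rfl
        neg_mem' := fun hs => hOneg _ hs } hOnhds
  haveI hT2 : T2Space F := by
    refine IsTopologicalAddGroup.t2Space_of_zero_sep (fun x hx => ?_)
    refine ⟨{y : F | y = 0 ∨ (((ord x).toNat + 1 : ℕ) : ℤ) ≤ ord y}, hOmem _, ?_⟩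
    intro h
    rcases h with h | h
    · exact hx h
    · omega
  have hOclosed : IsClosed (valRing ord) := hcomp.isClosed
  haveI hLC : LocallyCompactSpace F :=
    hcomp.locallyCompactSpace_of_mem_nhds_of_addGroup hOnhds
  -- ### measurability of `U`
  have hS1eq : {x : F | x = 0 ∨ (1 : ℤ) ≤ ord x} =
      (Homeomorph.mulLeft₀ ϖ hϖ0) '' valRing ord := by
    ext x
    rw [Homeomorph.coe_mulLeft₀]
    constructor
    · intro hx
      by_cases hx0 : x = 0
      · exact ⟨0, Or.inl rfl, by simp [hx0]⟩
      · rcases hx with h | h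
        · exact absurd h hx0
        · refine ⟨ϖ⁻¹ * x, Or.inr ?_, by field_simp⟩
          rw [hord _ _ (inv_ne_zero hϖ0) hx0, hordinv _ hϖ0, hϖ]
          omega
    · rintro ⟨y, hy, rfl⟩
      by_cases hy0 : y = 0
      · exact Or.inl (by simp [hy0])
      · rcases hy with h | h
        · exact absurd h hy0
        · refine Or.inr ?_
          rw [hord _ _ hϖ0 hy0, hϖ]
          omega
  have hS1open : IsOpen {x : F | x = 0 ∨ (1 : ℤ) ≤ ord x} := by
    rw [hS1eq]
    exact (Homeomorph.isOpen_image _).2 hOopen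
  have hUeq : unitGroup ord = valRing ord \ {x : F | x = 0 ∨ (1 : ℤ) ≤ ord x} := by
    ext x
    constructor
    · rintro ⟨hx0, hx⟩
      refine ⟨Or.inr (le_of_eq hx.symm), ?_⟩
      simp only [Set.mem_setOf_eq, not_or, not_le]
      exact ⟨hx0, by omega⟩
    · rintro ⟨h1, h2⟩
      simp only [Set.mem_setOf_eq, not_or, not_le] at h2
      rcases h1 with h1 | h1
      · exact absurd h1 h2.1
      · exact ⟨h2.1, by omega⟩
  have hUmeas : MeasurableSet (unitGroup ord) := by
    rw [hUeq]
    exact hOopen.measurableSet.diff hS1open.measurableSet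
  have hUsub : unitGroup ord ⊆ valRing ord := fun x hx => Or.inr (le_of_eq hx.2.symm)
  -- ### the change-of-variables principle for additive automorphisms preserving `U`
  have key : ∀ (e : F ≃+ F), Continuous (⇑e) → Continuous (⇑e.symm) →
      (⇑e) ⁻¹' (valRing ord) = valRing ord → (⇑e) ⁻¹' (unitGroup ord) = unitGroup ord →
      (∫ x in unitGroup ord, ψ (a * x) * χ x ∂μ)
        = ∫ x in unitGroup ord, ψ (a * e x) * χ (e x) ∂μ := by
    intro e hec hesc hO hU
    have hmeas_e : Measurable (⇑e) := hec.measurable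
    have hemb : MeasurableEmbedding (⇑e) :=
      (Homeomorph.mk e.toEquiv hec hesc).measurableEmbedding
    haveI hHaar : (Measure.map (⇑e) μ).IsAddHaarMeasure :=
      AddEquiv.isAddHaarMeasure_map μ e hec hesc
    have hOclos : IsCompact (closure (valRing ord)) := by
      rwa [hOclosed.closure_eq]
    have hfac := Measure.measure_isAddInvariant_eq_smul_of_isCompact_closure
      (Measure.map (⇑e) μ) μ hOclos
    have hmapO : Measure.map (⇑e) μ (valRing ord) = 1 := by
      rw [Measure.map_apply hmeas_e hOopen.measurableSet, hO, hμ1]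
    rw [hmapO, hμ1, ENNReal.smul_def, smul_eq_mul, mul_one] at hfac
    have hrestrict : (Measure.map (⇑e) μ).restrict (unitGroup ord)
        = μ.restrict (unitGroup ord) := by
      ext t ht
      rw [Measure.restrict_apply ht, Measure.restrict_apply ht]
      have hsub : t ∩ unitGroup ord ⊆ valRing ord :=
        (Set.inter_subset_right).trans hUsub
      have hclos : IsCompact (closure (t ∩ unitGroup ord)) :=
        hcomp.of_isClosed_subset isClosed_closure (closure_minimal hsub hOclosed)
      rw [Measure.measure_isAddInvariant_eq_smul_of_isCompact_closure
        (Measure.map (⇑e) μ) μ hclos, ENNReal.smul_def, smul_eq_mul, ← hfac, one_mul]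
    calc ∫ x in unitGroup ord, ψ (a * x) * χ x ∂μ
        = ∫ x in unitGroup ord, ψ (a * x) * χ x ∂(Measure.map (⇑e) μ) := by
          rw [hrestrict]
      _ = ∫ x in (⇑e) ⁻¹' (unitGroup ord), ψ (a * e x) * χ (e x) ∂μ :=
          hemb.setIntegral_map (fun y => ψ (a * y) * χ y) (unitGroup ord)
      _ = ∫ x in unitGroup ord, ψ (a * e x) * χ (e x) ∂μ := by rw [hU]
  -- ### reduce `mulInt` to the plain integral
  have hmulInt : mulInt μ q ord (unitGroup ord) (fun x => ψ (a * x) * χ x)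
      = (1 - (q : ℂ)⁻¹)⁻¹ * ∫ x in unitGroup ord, ψ (a * x) * χ x ∂μ := by
    unfold mulInt
    congr 1
    refine setIntegral_congr_fun hUmeas (fun x hx => ?_)
    simp only
    rw [hx.2, zpow_zero, mul_one]
  have hχ1 : χ 1 = 1 := by
    have h := hχ.1 1 1 one_ne_zero one_ne_zero
    rw [one_mul] at h
    exact (mul_left_cancel₀ (hχ.2 1 one_ne_zero) (by rw [← h, mul_one])).symm
  -- ### the main dichotomy
  have hIzero : (∫ x in unitGroup ord, ψ (a * x) * χ x ∂μ) = 0 := by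
    rcases lt_or_gt_of_ne haord with hlt | hgt
    · -- Case `ord a < -n` : translate by `b = ϖ^n`.
      obtain ⟨hbne, hbord⟩ := hpow n
      set b : F := ϖ ^ n with hb
      have himg : (fun x : F => x + b) '' unitGroup ord = unitGroup ord := by
        ext y
        constructor
        · rintro ⟨x, hx, rfl⟩
          have h := hltadd x b hx.1 hbne (by rw [hx.2, hbord]; omega)
          exact ⟨h.1, by rw [h.2]; exact hx.2⟩
        · intro hy
          refine ⟨y + (-b), ?_, by ring⟩
          have h := hltadd y (-b) hy.1 (neg_ne_zero.2 hbne)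
            (by rw [hy.2, hordneg _ hbne, hbord]; omega)
          exact ⟨h.1, by rw [h.2]; exact hy.2⟩
      have hmp : MeasurePreserving (fun x : F => x + b) μ μ :=
        measurePreserving_add_right μ b
      have hemb : MeasurableEmbedding (fun x : F => x + b) :=
        (Homeomorph.addRight b).measurableEmbedding
      have step1 : (∫ x in unitGroup ord, ψ (a * x) * χ x ∂μ)
          = ∫ x in unitGroup ord, ψ (a * (x + b)) * χ (x + b) ∂μ := by
        conv_lhs => rw [← himg]
        exact hmp.setIntegral_image_emb hemb (fun y => ψ (a * y) * χ y) (unitGroup ord)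
      have step2 : ∀ x ∈ unitGroup ord,
          ψ (a * (x + b)) * χ (x + b) = ψ (a * b) * (ψ (a * x) * χ x) := by
        intro x hx
        have hxne : x ≠ 0 := hx.1
        have hψsplit : ψ (a * (x + b)) = ψ (a * x) * ψ (a * b) := by
          rw [show a * (x + b) = a * x + a * b by ring, hψadd]
        have ht : x⁻¹ * b ≠ 0 := mul_ne_zero (inv_ne_zero hxne) hbne
        have htord : ord (x⁻¹ * b) = (n : ℤ) := by
          rw [hord _ _ (inv_ne_zero hxne) hbne, hordinv _ hxne, hx.2, hbord]
          ring
        have h1t := hltadd 1 (x⁻¹ * b) one_ne_zero ht (by rw [hord1, htord]; omega)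
        have hmem : (1 + x⁻¹ * b) ∈ unitGroupN ord n := by
          refine ⟨h1t.1, by rw [h1t.2, hord1], Or.inr ?_⟩
          rw [show (1 : F) + x⁻¹ * b - 1 = x⁻¹ * b by ring, htord]
        have hχsplit : χ (x + b) = χ x := by
          rw [show x + b = x * (1 + x⁻¹ * b) by field_simp,
            hχ.1 x _ hxne h1t.1, hχcond.1 _ hmem, mul_one]
        rw [hψsplit, hχsplit]
        ring
      have step3 : (∫ x in unitGroup ord, ψ (a * x) * χ x ∂μ)
          = ψ (a * b) * ∫ x in unitGroup ord, ψ (a * x) * χ x ∂μ := by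
        conv_lhs => rw [step1, setIntegral_congr_fun hUmeas step2]
        rw [integral_const_mul]
      have hψab : ψ (a * b) ≠ 1 := by
        intro h
        rcases (hψker _).1 h with h' | h'
        · exact (mul_ne_zero ha hbne) h'
        · rw [hord _ _ ha hbne, hbord] at h'
          omega
      have hmz : (ψ (a * b) - 1) * ∫ x in unitGroup ord, ψ (a * x) * χ x ∂μ = 0 := by
        rw [sub_mul, one_mul, ← step3, sub_self]
      rcases mul_eq_zero.1 hmz with h | h
      · exact absurd (sub_eq_zero.1 h) hψab
      · exact h
    · -- Case `ord a > -n` : multiply by a unit `u ∈ U^{(n-1)}` with `χ u ≠ 1`.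
      obtain ⟨u, hu, hχu⟩ := hχcond.2 (n - 1) (by omega)
      obtain ⟨hune, huord, hu1⟩ := hu
      have hune1 : u ≠ 1 := fun h => hχu (by rw [h, hχ1])
      have hd : ((n : ℤ) - 1) ≤ ord (u - 1) := by
        rcases hu1 with h | h
        · exact absurd h hune1
        · omega
      have hd0 : u - 1 ≠ 0 := sub_ne_zero.2 hune1
      set e : F ≃+ F := mulLeftAddEquiv u hune with he
      have hec : Continuous (⇑e) := continuous_const.mul continuous_id
      have hesc : Continuous (⇑e.symm) := continuous_const.mul continuous_id
      have hOpre : (⇑e) ⁻¹' (valRing ord) = valRing ord := by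
        ext x
        show u * x ∈ valRing ord ↔ x ∈ valRing ord
        constructor
        · intro h
          by_cases hx0 : x = 0
          · exact Or.inl hx0
          · rcases h with h | h
            · exact absurd h (mul_ne_zero hune hx0)
            · rw [hord _ _ hune hx0, huord] at h
              exact Or.inr (by omega)
        · intro h
          by_cases hx0 : x = 0
          · exact Or.inl (by rw [hx0, mul_zero])
          · rcases h with h | h
            · exact absurd h hx0
            · refine Or.inr ?_
              rw [hord _ _ hune hx0, huord]
              omega
      have hUpre : (⇑e) ⁻¹' (unitGroup ord) = unitGroup ord := by
        ext x
        show u * x ∈ unitGroup ord ↔ x ∈ unitGroup ord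
        constructor
        · rintro ⟨h1, h2⟩
          have hx0 : x ≠ 0 := fun h => h1 (by rw [h, mul_zero])
          rw [hord _ _ hune hx0, huord] at h2
          exact ⟨hx0, by omega⟩
        · rintro ⟨h1, h2⟩
          refine ⟨mul_ne_zero hune h1, ?_⟩
          rw [hord _ _ hune h1, huord, h2]
          ring
      have step1 := key e hec hesc hOpre hUpre
      have hcoe : ∀ x : F, e x = u * x := fun _ => rfl
      have step2 : ∀ x ∈ unitGroup ord,
          ψ (a * e x) * χ (e x) = χ u * (ψ (a * x) * χ x) := by
        intro x hx
        have hxne : x ≠ 0 := hx.1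
        rw [hcoe]
        have hmem : a * x * (u - 1) ∈ valRing ord := by
          refine Or.inr ?_
          rw [hord _ _ (mul_ne_zero ha hxne) hd0, hord _ _ ha hxne, hx.2]
          omega
        have hψeq : ψ (a * (u * x)) = ψ (a * x) := by
          rw [show a * (u * x) = a * x + a * x * (u - 1) by ring, hψadd,
            (hψker _).2 hmem, mul_one]
        rw [hψeq, hχ.1 u x hune hxne]
        ring
      have step3 : (∫ x in unitGroup ord, ψ (a * x) * χ x ∂μ)
          = χ u * ∫ x in unitGroup ord, ψ (a * x) * χ x ∂μ := by
        conv_lhs => rw [step1, setIntegral_congr_fun hUmeas step2]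
        rw [integral_const_mul]
      have hmz : (χ u - 1) * ∫ x in unitGroup ord, ψ (a * x) * χ x ∂μ = 0 := by
        rw [sub_mul, one_mul, ← step3, sub_self]
      rcases mul_eq_zero.1 hmz with h | h
      · exact absurd (sub_eq_zero.1 h) hχu
      · exact h
  rw [hmulInt, hIzero, mul_zero]
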